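/- Lyapunov decrease for EXP-D-RL under monotonicity: let ε > 0, γ > 0, consider N players with action counts n^p, n = Σ_p n^p, strategy space Δ = Π_p Δ^{n^p} ⊂ ℝⁿ, blockwise soft-max σ : ℝⁿ → ℝⁿ, and a continuous payoff map U : Δ → ℝⁿ such that −U is monotone on Δ, i.e., (x − x')ᵀ(U(x) − U(x')) ≤ 0 for all x, x' ∈ Δ. Let z̄* ∈ ℝⁿ satisfy z̄* = U(σ(z̄*)), and define V(z) = Σ_p (lse_ε(z^p) − lse_ε(z̄*^p) − σ_ε(z̄*^p)ᵀ(z^p − z̄*^p)). Then along every differentiable solution z : ℝ → ℝⁿ of ż(t) = γ(U(σ(z(t))) − z(t)), one has d/dt V(z(t)) ≤ −γε‖σ(z(t)) − σ(z̄*)‖₂² for all t. -/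

import Mathlib

open Filter

/-- The soft-max function with temperature `ε`. -/
noncomputable def softmax (ε : ℝ) {m : ℕ} (w : Fin m → ℝ) : Fin m → ℝ :=
  fun i => Real.exp (w i / ε) / ∑ j, Real.exp (w j / ε)

/-- The log-sum-exp function with temperature `ε`. -/
noncomputable def lse (ε : ℝ) {m : ℕ} (w : Fin m → ℝ) : ℝ :=
  ε * Real.log (∑ j, Real.exp (w j / ε))

/-- The blockwise soft-max `σ(z) = (σ_ε(z^p))_p`. -/
noncomputable def softmaxBlk (ε : ℝ) {N : ℕ} {nAct : Fin N → ℕ}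
    (z : ∀ p, Fin (nAct p) → ℝ) : ∀ p, Fin (nAct p) → ℝ :=
  fun p => softmax ε (z p)

/-- The strategy space `Δ = Π_p Δ^{n^p}`. -/
def simplexProd (N : ℕ) (nAct : Fin N → ℕ) : Set (∀ p, Fin (nAct p) → ℝ) :=
  {x | ∀ p, (∀ i, 0 ≤ x p i) ∧ ∑ i, x p i = 1}

/-- The Bregman-divergence storage function
`V(z) = Σ_p (lse_ε(z^p) − lse_ε(z̄^p) − σ_ε(z̄^p)ᵀ(z^p − z̄^p))`. -/
noncomputable def bregV (ε : ℝ) {N : ℕ} {nAct : Fin N → ℕ}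
    (zbar z : ∀ p, Fin (nAct p) → ℝ) : ℝ :=
  ∑ p, (lse ε (z p) - lse ε (zbar p) - ∑ i, softmax ε (zbar p) i * (z p i - zbar p i))

lemma sum_exp_pos {m : ℕ} (hm : 0 < m) (w : Fin m → ℝ) (ε : ℝ) :
    0 < ∑ j, Real.exp (w j / ε) := by
  apply Finset.sum_pos (fun j _ => Real.exp_pos _)
  exact Finset.univ_nonempty_iff.2 (Fin.pos_iff_nonempty.1 hm)

lemma softmax_pos {m : ℕ} (hm : 0 < m) (ε : ℝ) (w : Fin m → ℝ) (i : Fin m) :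
    0 < softmax ε w i :=
  div_pos (Real.exp_pos _) (sum_exp_pos hm w ε)

lemma softmax_sum {m : ℕ} (hm : 0 < m) (ε : ℝ) (w : Fin m → ℝ) :
    ∑ i, softmax ε w i = 1 := by
  simp only [softmax, ← Finset.sum_div]
  exact div_self (sum_exp_pos hm w ε).ne'

lemma softmax_le_one {m : ℕ} (hm : 0 < m) (ε : ℝ) (w : Fin m → ℝ) (i : Fin m) :
    softmax ε w i ≤ 1 := by
  rw [softmax, div_le_one (sum_exp_pos hm w ε)]
  exact Finset.single_le_sum (f := fun j => Real.exp (w j / ε))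
    (fun j _ => (Real.exp_pos _).le) (Finset.mem_univ i)

lemma log_softmax {m : ℕ} (hm : 0 < m) (ε : ℝ) (w : Fin m → ℝ) (i : Fin m) :
    Real.log (softmax ε w i) = w i / ε - Real.log (∑ j, Real.exp (w j / ε)) := by
  rw [softmax, Real.log_div (Real.exp_pos _).ne' (sum_exp_pos hm w ε).ne', Real.log_exp]

lemma key_pt (a b : ℝ) (ha : 0 < a) (ha1 : a ≤ 1) (hb : 0 < b) (hb1 : b ≤ 1) :
    (a - b) ^ 2 ≤ (a - b) * (Real.log a - Real.log b) := by
  wlog hab : b ≤ a generalizing a b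
  · have := this b a hb hb1 ha ha1 (le_of_not_ge hab)
    calc (a-b)^2 = (b-a)^2 := by ring
    _ ≤ (b - a) * (Real.log b - Real.log a) := this
    _ = (a - b) * (Real.log a - Real.log b) := by ring
  have h1 : Real.log (b / a) ≤ b / a - 1 := Real.log_le_sub_one_of_pos (div_pos hb ha)
  rw [Real.log_div hb.ne' ha.ne'] at h1
  have h2 : a - b ≤ Real.log a - Real.log b := by
    have : 1 - b / a = (a - b) / a := by field_simp
    have h3 : (a - b) / a ≤ Real.log a - Real.log b := by linarith
    have h4 : a - b ≤ (a - b) / a := by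
      rw [le_div_iff₀ ha]
      nlinarith
    linarith
  have : 0 ≤ a - b := by linarith
  nlinarith

lemma key_blk {m : ℕ} (hm : 0 < m) {ε : ℝ} (hε : 0 < ε) (w v : Fin m → ℝ) :
    ε * ∑ i, (softmax ε w i - softmax ε v i) ^ 2 ≤
      ∑ i, (softmax ε w i - softmax ε v i) * (w i - v i) := by
  have h1 : ∑ i, (softmax ε w i - softmax ε v i) ^ 2 ≤
      ∑ i, (softmax ε w i - softmax ε v i) * (Real.log (softmax ε w i) - Real.log (softmax ε v i)) := by
    apply Finset.sum_le_sum
    intro i _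
    exact key_pt _ _ (softmax_pos hm ε w i) (softmax_le_one hm ε w i)
      (softmax_pos hm ε v i) (softmax_le_one hm ε v i)
  have h2 : ∀ i, (softmax ε w i - softmax ε v i) *
      (Real.log (softmax ε w i) - Real.log (softmax ε v i)) =
      (softmax ε w i - softmax ε v i) * (w i - v i) / ε
      - (Real.log (∑ j, Real.exp (w j / ε)) - Real.log (∑ j, Real.exp (v j / ε)))
        * (softmax ε w i - softmax ε v i) := by
    intro i
    rw [log_softmax hm, log_softmax hm]
    field_simp
    ring
  have h3 : ∑ i, (softmax ε w i - softmax ε v i) *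
      (Real.log (softmax ε w i) - Real.log (softmax ε v i)) =
      (∑ i, (softmax ε w i - softmax ε v i) * (w i - v i)) / ε := by
    simp only [h2, Finset.sum_sub_distrib, ← Finset.mul_sum, ← Finset.sum_div]
    rw [softmax_sum hm, softmax_sum hm]
    ring
  rw [h3] at h1
  calc ε * ∑ i, (softmax ε w i - softmax ε v i) ^ 2
      ≤ ε * ((∑ i, (softmax ε w i - softmax ε v i) * (w i - v i)) / ε) :=
        mul_le_mul_of_nonneg_left h1 hε.le
    _ = ∑ i, (softmax ε w i - softmax ε v i) * (w i - v i) := by field_simp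

lemma hasDerivAt_lse {m : ℕ} (hm : 0 < m) {ε : ℝ} (hε : 0 < ε)
    (f : ℝ → Fin m → ℝ) (f' : Fin m → ℝ) (t : ℝ)
    (hf : ∀ i, HasDerivAt (fun s => f s i) (f' i) t) :
    HasDerivAt (fun s => lse ε (f s)) (∑ i, softmax ε (f t) i * f' i) t := by
  have hsum : HasDerivAt (fun s => ∑ j, Real.exp (f s j / ε))
      (∑ j, Real.exp (f t j / ε) * (f' j / ε)) t := by
    apply HasDerivAt.fun_sum
    intro j _
    exact ((hf j).div_const ε).exp
  have hS : (∑ j, Real.exp (f t j / ε)) ≠ 0 := (sum_exp_pos hm (f t) ε).ne'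
  have hlog := (hsum.log hS).const_mul ε
  refine hlog.congr_deriv ?_
  rw [Finset.sum_div, Finset.mul_sum]
  refine Finset.sum_congr rfl fun i _ => ?_
  simp only [softmax]
  field_simp

lemma softmaxBlk_mem {N : ℕ} {nAct : Fin N → ℕ} (hn : ∀ p, 0 < nAct p)
    {ε : ℝ} (y : ∀ p, Fin (nAct p) → ℝ) :
    softmaxBlk ε y ∈ simplexProd N nAct :=
  fun p => ⟨fun i => (softmax_pos (hn p) ε (y p) i).le, softmax_sum (hn p) ε (y p)⟩

/-- Lyapunov decrease for EXP-D-RL under monotonicity: if `−U` is monotone on `Δ`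
and `z̄* = U(σ(z̄*))`, then along every solution of `ż = γ(U(σ(z)) − z)` one has
`d/dt V(z(t)) ≤ −γε‖σ(z(t)) − σ(z̄*)‖₂²`. -/
theorem lyapunov_decrease_monotone (ε γ : ℝ) (hε : 0 < ε) (hγ : 0 < γ)
    (N : ℕ) (nAct : Fin N → ℕ) (hn : ∀ p, 0 < nAct p)
    (U : (∀ p, Fin (nAct p) → ℝ) → ∀ p, Fin (nAct p) → ℝ)
    (hU_cont : ContinuousOn U (simplexProd N nAct))
    (hU_mono : ∀ x ∈ simplexProd N nAct, ∀ x' ∈ simplexProd N nAct,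
      ∑ p, ∑ i, (x p i - x' p i) * (U x p i - U x' p i) ≤ 0)
    (zs : ∀ p, Fin (nAct p) → ℝ) (hzs : U (softmaxBlk ε zs) = zs)
    (z : ℝ → ∀ p, Fin (nAct p) → ℝ)
    (hz : ∀ t, ∀ p, ∀ i,
      HasDerivAt (fun s => z s p i) (γ * (U (softmaxBlk ε (z t)) p i - z t p i)) t) :
    ∀ t, deriv (fun s => bregV ε zs (z s)) t ≤
      -γ * ε * ∑ p, ∑ i, (softmax ε (z t p) i - softmax ε (zs p) i) ^ 2 := by
  intro t
  set v : ∀ p, Fin (nAct p) → ℝ := fun p i => γ * (U (softmaxBlk ε (z t)) p i - z t p i)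
    with hv_def
  have hv : ∀ p i, HasDerivAt (fun s => z s p i) (v p i) t := hz t
  -- derivative of V along the trajectory
  have hV : HasDerivAt (fun s => bregV ε zs (z s))
      (∑ p, ∑ i, (softmax ε (z t p) i - softmax ε (zs p) i) * v p i) t := by
    unfold bregV
    apply HasDerivAt.fun_sum
    intro p _
    have h1 : HasDerivAt (fun s => lse ε (z s p)) (∑ i, softmax ε (z t p) i * v p i) t :=
      hasDerivAt_lse (hn p) hε (fun s => z s p) (v p) t (fun i => hv p i)
    have h2 : HasDerivAt (fun s => ∑ i, softmax ε (zs p) i * (z s p i - zs p i))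
        (∑ i, softmax ε (zs p) i * v p i) t := by
      apply HasDerivAt.fun_sum
      intro i _
      exact ((hv p i).sub_const (zs p i)).const_mul _
    have h3 := (h1.sub_const (lse ε (zs p))).fun_sub h2
    convert h3 using 1
    rw [← Finset.sum_sub_distrib]
    exact Finset.sum_congr rfl fun i _ => by ring
  rw [hV.deriv]
  -- algebraic splitting using the fixed point z̄* = U(σ(z̄*))
  have hzs' : ∀ p i, U (softmaxBlk ε zs) p i = zs p i := fun p i => by rw [hzs]
  have key : ∀ p, ∀ i,
      (softmax ε (z t p) i - softmax ε (zs p) i) * v p i =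
        γ * ((softmaxBlk ε (z t) p i - softmaxBlk ε zs p i) *
          (U (softmaxBlk ε (z t)) p i - U (softmaxBlk ε zs) p i))
        - γ * ((softmax ε (z t p) i - softmax ε (zs p) i) * (z t p i - zs p i)) := by
    intro p i
    have h := hzs' p i
    simp only [hv_def, softmaxBlk]
    rw [h]
    ring
  simp only [key, Finset.sum_sub_distrib, ← Finset.mul_sum]
  -- monotonicity bound
  have hA : ∑ p, ∑ i, (softmaxBlk ε (z t) p i - softmaxBlk ε zs p i) *
      (U (softmaxBlk ε (z t)) p i - U (softmaxBlk ε zs) p i) ≤ 0 :=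
    hU_mono _ (softmaxBlk_mem hn (z t)) _ (softmaxBlk_mem hn zs)
  -- co-coercivity bound
  have hB : ε * ∑ p, ∑ i, (softmax ε (z t p) i - softmax ε (zs p) i) ^ 2 ≤
      ∑ p, ∑ i, (softmax ε (z t p) i - softmax ε (zs p) i) * (z t p i - zs p i) := by
    rw [Finset.mul_sum]
    exact Finset.sum_le_sum fun p _ => key_blk (hn p) hε (z t p) (zs p)
  have h1 : γ * (∑ p, ∑ i, (softmaxBlk ε (z t) p i - softmaxBlk ε zs p i) *
      (U (softmaxBlk ε (z t)) p i - U (softmaxBlk ε zs) p i)) ≤ 0 :=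
    mul_nonpos_of_nonneg_of_nonpos hγ.le hA
  have h2 : γ * (ε * ∑ p, ∑ i, (softmax ε (z t p) i - softmax ε (zs p) i) ^ 2) ≤
      γ * ∑ p, ∑ i, (softmax ε (z t p) i - softmax ε (zs p) i) * (z t p i - zs p i) :=
    mul_le_mul_of_nonneg_left hB hγ.le
  have h3 : -γ * ε * ∑ p, ∑ i, (softmax ε (z t p) i - softmax ε (zs p) i) ^ 2 =
      -(γ * (ε * ∑ p, ∑ i, (softmax ε (z t p) i - softmax ε (zs p) i) ^ 2)) := by ring
  rw [h3]
  linarith
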